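/- Let H : ℝ → ℝ be continuous and coercive and F0 : ℝ → ℝ be continuous, non-increasing and semi-coercive, and let p ∈ ℝ. Define Q̲ := {q ∈ ℝ : F0(q) ∈ G̲(q,p)} and Q̄ := {q ∈ ℝ : F0(q) ∈ Ḡ(q,p)} (viewing F0(q) as an extended real). Then Q̲ is non-empty and contained in [p, +∞), and F0 takes a single value on Q̲; likewise Q̄ is non-empty and contained in (−∞, p], and F0 takes a single value on Q̄. -/

import Mathlib

open Set Filter

attribute [local instance] Classical.propDecidable

noncomputable section

/-- `H` is coercive: `H p → +∞` as `|p| → +∞`. -/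
def Coercive (H : ℝ → ℝ) : Prop := Tendsto H (cocompact ℝ) atTop

/-- `F` is semi-coercive: `F p → +∞` as `p → -∞`. -/
def SemiCoercive (F : ℝ → ℝ) : Prop := Tendsto F atBot atTop

/-- Sub-relaxation: `(R̲F)(p) = sup_{q ≥ p} min (F q) (H q)`. -/
def subR (H F : ℝ → ℝ) (p : ℝ) : ℝ := sSup ((fun q => min (F q) (H q)) '' Ici p)

/-- Super-relaxation: `(R̄F)(p) = inf_{q ≤ p} max (F q) (H q)`. -/
def supR (H F : ℝ → ℝ) (p : ℝ) : ℝ := sInf ((fun q => max (F q) (H q)) '' Iic p)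

/-- Relaxation operator: `R̲F` where `F ≥ H`, `R̄F` where `F ≤ H`. -/
def relax (H F : ℝ → ℝ) (p : ℝ) : ℝ := if H p ≤ F p then subR H F p else supR H F p

/-- `p` is a negative characteristic point of `F` relative to `H`. -/
def negChar (H F : ℝ → ℝ) (p : ℝ) : Prop :=
  H p = F p ∧ ∃ ε > 0, ∀ q ∈ Ioo (p - ε) p, H q < H p

/-- `p` is a positive characteristic point of `F` relative to `H`. -/
def posChar (H F : ℝ → ℝ) (p : ℝ) : Prop :=
  H p = F p ∧ ∃ ε > 0, ∀ q ∈ Ioo p (p + ε), H p < H q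

/-- The upper point `p⁺ ∈ ℝ ∪ {+∞}` associated with `p` and `H`. -/
def upperPt (H : ℝ → ℝ) (p : ℝ) : EReal :=
  if ∀ ε > 0, ∃ q, p < q ∧ q < p + ε ∧ H q ≤ H p then (p : EReal)
  else sSup ((fun q : ℝ => (q : EReal)) '' {q : ℝ | p < q ∧ ∀ r ∈ Ioo p q, H p < H r})

/-- The lower point `p⁻` associated with `p` and `H`. -/
def lowerPt (H : ℝ → ℝ) (p : ℝ) : ℝ :=
  if ∀ ε > 0, ∃ q, p - ε < q ∧ q < p ∧ H p ≤ H q then p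
  else sInf {q : ℝ | q < p ∧ ∀ r ∈ Ioo q p, H r < H p}

/-- `p` is a positive limiter point of `F`. -/
def posLimiter (H F : ℝ → ℝ) (p : ℝ) : Prop :=
  (p : EReal) < upperPt H p ∧ F p ≤ H p ∧
    ∀ q : ℝ, H q < H p → F q ≤ H q →
      {r : ℝ | lowerPt H q < r ∧ (r : EReal) < upperPt H q} ∩
        {r : ℝ | p < r ∧ (r : EReal) < upperPt H p} = ∅

/-- `p` is a negative limiter point of `F`. -/
def negLimiter (H F : ℝ → ℝ) (p : ℝ) : Prop :=
  lowerPt H p < p ∧ H p ≤ F p ∧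
    ∀ q : ℝ, H q ≤ F q → H p < H q →
      {r : ℝ | lowerPt H q < r ∧ (r : EReal) < upperPt H q} ∩ Ioo (lowerPt H p) p = ∅

/-- The Godunov flux associated with `H`. -/
def godunov (H : ℝ → ℝ) (q p : ℝ) : ℝ :=
  if p ≤ q then sSup (H '' Icc p q) else sInf (H '' Icc q p)

/-- The lower (set-valued) Godunov semi-flux `G̲(q,p)`, as a subset of the extended reals. -/
def subG (H : ℝ → ℝ) (q p : ℝ) : Set EReal :=
  if q < p then {⊥}
  else if q = p then Iic ((H p : ℝ) : EReal)
  else {((godunov H q p : ℝ) : EReal)}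

/-- The upper (set-valued) Godunov semi-flux `Ḡ(q,p)`, as a subset of the extended reals. -/
def supG (H : ℝ → ℝ) (q p : ℝ) : Set EReal :=
  if q < p then {((godunov H q p : ℝ) : EReal)}
  else if q = p then Ici ((H p : ℝ) : EReal)
  else {⊤}

lemma my_exists_big (H : ℝ → ℝ) (hHc : Coercive H) (c p : ℝ) :
    ∃ x, p ≤ x ∧ c < H x := by
  have h := hHc.eventually (eventually_gt_atTop c)
  obtain ⟨K, hK, hKs⟩ := Filter.hasBasis_cocompact.eventually_iff.mp h
  obtain ⟨r, hr⟩ := hK.isBounded.subset_closedBall 0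
  refine ⟨max p (r + 1), le_max_left _ _, hKs ?_⟩
  intro hmem
  have h1 : |max p (r + 1)| ≤ r := by simpa [Real.dist_eq] using hr hmem
  have h2 : r + 1 ≤ max p (r + 1) := le_max_right _ _
  have := le_abs_self (max p (r + 1))
  linarith

/-- Existence of a crossing point for the sub-flux when `H p < F0 p`. -/
lemma my_sub_exists (H F0 : ℝ → ℝ) (hH : Continuous H)
    (hHc : Coercive H) (hF : Continuous F0) (hFa : Antitone F0) (p : ℝ)
    (hp : H p < F0 p) : ∃ q, p < q ∧ F0 q = sSup (H '' Icc p q) := by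
  set A : Set ℝ := Ici p ∩ ⋂ x : ℝ, {q : ℝ | H (max p (min x q)) ≤ F0 q} with hAdef
  have hA_iff : ∀ q, q ∈ A ↔ p ≤ q ∧ ∀ x ∈ Icc p q, H x ≤ F0 q := by
    intro q
    constructor
    · rintro ⟨hq1, hq2⟩
      simp only [mem_iInter, mem_setOf_eq] at hq2
      refine ⟨hq1, fun x hx => ?_⟩
      have : max p (min x q) = x := by
        rw [min_eq_left hx.2, max_eq_right hx.1]
      rw [← this]; exact hq2 x
    · rintro ⟨hq1, hq2⟩
      refine ⟨hq1, ?_⟩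
      simp only [mem_iInter, mem_setOf_eq]
      intro x
      exact hq2 _ ⟨le_max_left _ _, max_le hq1 (min_le_right _ _)⟩
  have hA_closed : IsClosed A := by
    refine isClosed_Ici.inter (isClosed_iInter fun x => ?_)
    exact isClosed_le (hH.comp (continuous_const.max (continuous_const.min continuous_id))) hF
  have hpA : p ∈ A := by
    rw [hA_iff]
    exact ⟨le_refl p, fun x hx => by
      have : x = p := le_antisymm hx.2 hx.1
      rw [this]; exact hp.le⟩
  obtain ⟨x0, hx0p, hx0⟩ := my_exists_big H hHc (F0 p) p
  have hA_bdd : BddAbove A := by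
    refine ⟨x0, fun q hq => ?_⟩
    rw [hA_iff] at hq
    by_contra hqx
    push_neg at hqx
    have h1 : H x0 ≤ F0 q := hq.2 x0 ⟨hx0p, hqx.le⟩
    have h2 : F0 q ≤ F0 p := hFa hq.1
    linarith
  set Q := sSup A with hQdef
  have hQA : Q ∈ A := hA_closed.csSup_mem ⟨p, hpA⟩ hA_bdd
  rw [hA_iff] at hQA
  obtain ⟨hpQ, hQle⟩ := hQA
  have hbddIm : ∀ q : ℝ, BddAbove (H '' Icc p q) := fun q => (isCompact_Icc.image hH).bddAbove
  have hMle : sSup (H '' Icc p Q) ≤ F0 Q := by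
    have hne : (H '' Icc p Q).Nonempty := ⟨H p, mem_image_of_mem H ⟨le_refl p, hpQ⟩⟩
    apply csSup_le hne
    rintro y ⟨x, hx, rfl⟩
    exact hQle x hx
  have hMge : F0 Q ≤ sSup (H '' Icc p Q) := by
    by_contra hlt
    push_neg at hlt
    set M := sSup (H '' Icc p Q) with hMdef
    set d := F0 Q - M with hddef
    have hd : 0 < d := by simp [hddef]; linarith
    obtain ⟨δ1, hδ1pos, hδ1⟩ := Metric.continuousAt_iff.mp hH.continuousAt (d / 2) (by linarith)
    obtain ⟨δ2, hδ2pos, hδ2⟩ := Metric.continuousAt_iff.mp (hF.continuousAt (x := Q)) (d / 2) (by linarith)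
    set η := min δ1 δ2 / 2 with hηdef
    have hηpos : 0 < η := by positivity
    have hηδ1 : η < δ1 := by
      have := min_le_left δ1 δ2; simp [hηdef]; linarith
    have hηδ2 : η < δ2 := by
      have := min_le_right δ1 δ2; simp [hηdef]; linarith
    have hF0b : F0 Q - d / 2 < F0 (Q + η) := by
      have h := hδ2 (x := Q + η) (by rw [Real.dist_eq]; rw [abs_of_nonneg (by linarith : (0:ℝ) ≤ Q + η - Q)]; linarith)
      rw [Real.dist_eq, abs_lt] at h
      linarith
    have hHQM : H Q ≤ M := le_csSup (hbddIm Q) (mem_image_of_mem H ⟨hpQ, le_refl Q⟩)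
    have hmem : Q + η ∈ A := by
      rw [hA_iff]
      refine ⟨by linarith, fun x hx => ?_⟩
      rcases le_or_gt x Q with hxQ | hxQ
      · have : H x ≤ M := le_csSup (hbddIm Q) (mem_image_of_mem H ⟨hx.1, hxQ⟩)
        simp only [hddef] at hd ⊢
        linarith
      · have hd1 : dist x Q < δ1 := by
          rw [Real.dist_eq, abs_of_nonneg (by linarith : (0:ℝ) ≤ x - Q)]
          have := hx.2
          linarith
        have h := hδ1 hd1
        rw [Real.dist_eq, abs_lt] at h
        simp only [hddef] at hd ⊢
        linarith
    have : Q + η ≤ Q := le_csSup hA_bdd hmem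
    linarith
  have heq : F0 Q = sSup (H '' Icc p Q) := le_antisymm hMge hMle
  have hQne : p ≠ Q := by
    intro h
    rw [← h] at heq
    rw [Icc_self, image_singleton, csSup_singleton] at heq
    linarith
  exact ⟨Q, lt_of_le_of_ne hpQ hQne, heq⟩

/-- Existence of a crossing point for the super-flux when `F0 p < H p`. -/
lemma my_sup_exists (H F0 : ℝ → ℝ) (hH : Continuous H)
    (hF : Continuous F0) (hFa : Antitone F0) (hFs : SemiCoercive F0) (p : ℝ)
    (hp : F0 p < H p) : ∃ q, q < p ∧ F0 q = sInf (H '' Icc q p) := by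
  set B : Set ℝ := Iic p ∩ ⋂ x : ℝ, {q : ℝ | F0 q ≤ H (max q (min x p))} with hBdef
  have hB_iff : ∀ q, q ∈ B ↔ q ≤ p ∧ ∀ x ∈ Icc q p, F0 q ≤ H x := by
    intro q
    constructor
    · rintro ⟨hq1, hq2⟩
      simp only [mem_iInter, mem_setOf_eq] at hq2
      refine ⟨hq1, fun x hx => ?_⟩
      have : max q (min x p) = x := by
        rw [min_eq_left hx.2, max_eq_right hx.1]
      rw [← this]; exact hq2 x
    · rintro ⟨hq1, hq2⟩
      refine ⟨hq1, ?_⟩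
      simp only [mem_iInter, mem_setOf_eq]
      intro x
      exact hq2 _ ⟨le_max_left _ _, max_le hq1 (min_le_right _ _)⟩
  have hB_closed : IsClosed B := by
    refine isClosed_Iic.inter (isClosed_iInter fun x => ?_)
    exact isClosed_le hF (hH.comp (continuous_id.max (continuous_const.min continuous_const)))
  have hpB : p ∈ B := by
    rw [hB_iff]
    exact ⟨le_refl p, fun x hx => by
      have : x = p := le_antisymm hx.2 hx.1
      rw [this]; exact hp.le⟩
  obtain ⟨q0, hq0⟩ := eventually_atBot.mp (hFs.eventually (eventually_gt_atTop (H p)))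
  have hB_bdd : BddBelow B := by
    refine ⟨min q0 p, fun q hq => ?_⟩
    rw [hB_iff] at hq
    by_contra hqx
    push_neg at hqx
    have h1 : F0 q ≤ H p := hq.2 p ⟨hq.1, le_refl p⟩
    have h2 : H p < F0 q := hq0 q (le_of_lt (lt_of_lt_of_le hqx (min_le_left _ _)))
    linarith
  set Q := sInf B with hQdef
  have hQB : Q ∈ B := hB_closed.csInf_mem ⟨p, hpB⟩ hB_bdd
  rw [hB_iff] at hQB
  obtain ⟨hpQ, hQle⟩ := hQB
  have hbddIm : ∀ q : ℝ, BddBelow (H '' Icc q p) := fun q => (isCompact_Icc.image hH).bddBelow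
  have hMge : F0 Q ≤ sInf (H '' Icc Q p) := by
    have hne : (H '' Icc Q p).Nonempty := ⟨H p, mem_image_of_mem H ⟨hpQ, le_refl p⟩⟩
    apply le_csInf hne
    rintro y ⟨x, hx, rfl⟩
    exact hQle x hx
  have hMle : sInf (H '' Icc Q p) ≤ F0 Q := by
    by_contra hlt
    push_neg at hlt
    set M := sInf (H '' Icc Q p) with hMdef
    set d := M - F0 Q with hddef
    have hd : 0 < d := by simp [hddef]; linarith
    obtain ⟨δ1, hδ1pos, hδ1⟩ := Metric.continuousAt_iff.mp hH.continuousAt (d / 2) (by linarith)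
    obtain ⟨δ2, hδ2pos, hδ2⟩ := Metric.continuousAt_iff.mp (hF.continuousAt (x := Q)) (d / 2) (by linarith)
    set η := min δ1 δ2 / 2 with hηdef
    have hηpos : 0 < η := by positivity
    have hηδ1 : η < δ1 := by
      have := min_le_left δ1 δ2; simp [hηdef]; linarith
    have hηδ2 : η < δ2 := by
      have := min_le_right δ1 δ2; simp [hηdef]; linarith
    have hF0b : F0 (Q - η) < F0 Q + d / 2 := by
      have h := hδ2 (x := Q - η) (by rw [Real.dist_eq]; rw [abs_of_nonpos (by linarith : Q - η - Q ≤ 0)]; linarith)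
      rw [Real.dist_eq, abs_lt] at h
      linarith
    have hHQM : M ≤ H Q := csInf_le (hbddIm Q) (mem_image_of_mem H ⟨le_refl Q, hpQ⟩)
    have hmem : Q - η ∈ B := by
      rw [hB_iff]
      refine ⟨by linarith, fun x hx => ?_⟩
      rcases le_or_gt Q x with hxQ | hxQ
      · have : M ≤ H x := csInf_le (hbddIm Q) (mem_image_of_mem H ⟨hxQ, hx.2⟩)
        simp only [hddef] at hd ⊢
        linarith
      · have hd1 : dist x Q < δ1 := by
          rw [Real.dist_eq, abs_of_nonpos (by linarith : x - Q ≤ 0)]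
          have := hx.1
          linarith
        have h := hδ1 hd1
        rw [Real.dist_eq, abs_lt] at h
        simp only [hddef] at hd ⊢
        linarith
    have : Q ≤ Q - η := csInf_le hB_bdd hmem
    linarith
  have heq : F0 Q = sInf (H '' Icc Q p) := le_antisymm hMge hMle
  have hQne : Q ≠ p := by
    intro h
    rw [h] at heq
    rw [Icc_self, image_singleton, csInf_singleton] at heq
    linarith
  exact ⟨Q, lt_of_le_of_ne hpQ hQne, heq⟩

/-- The lower and upper Godunov operators are well defined. -/
theorem godunov_semi_flux_actions_well_defined (H F0 : ℝ → ℝ)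
    (hH : Continuous H) (hHc : Coercive H)
    (hF : Continuous F0) (hFa : Antitone F0) (hFs : SemiCoercive F0) (p : ℝ) :
    ({q : ℝ | (F0 q : EReal) ∈ subG H q p}.Nonempty ∧
     {q : ℝ | (F0 q : EReal) ∈ subG H q p} ⊆ Ici p ∧
     (∀ q₁ ∈ {q : ℝ | (F0 q : EReal) ∈ subG H q p},
      ∀ q₂ ∈ {q : ℝ | (F0 q : EReal) ∈ subG H q p}, F0 q₁ = F0 q₂)) ∧
    ({q : ℝ | (F0 q : EReal) ∈ supG H q p}.Nonempty ∧
     {q : ℝ | (F0 q : EReal) ∈ supG H q p} ⊆ Iic p ∧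
     (∀ q₁ ∈ {q : ℝ | (F0 q : EReal) ∈ supG H q p},
      ∀ q₂ ∈ {q : ℝ | (F0 q : EReal) ∈ supG H q p}, F0 q₁ = F0 q₂)) := by
  have hbddA : ∀ a b : ℝ, BddAbove (H '' Icc a b) := fun a b => (isCompact_Icc.image hH).bddAbove
  have hbddB : ∀ a b : ℝ, BddBelow (H '' Icc a b) := fun a b => (isCompact_Icc.image hH).bddBelow
  -- characterization for subG membership
  have hsub_sub : {q : ℝ | (F0 q : EReal) ∈ subG H q p} ⊆ Ici p := by
    intro q hq
    simp only [mem_setOf_eq, subG] at hq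
    by_contra hlt
    rw [mem_Ici] at hlt
    rw [if_pos (not_le.mp hlt)] at hq
    exact EReal.coe_ne_bot (F0 q) hq
  have hsub_eq : ∀ q ∈ {q : ℝ | (F0 q : EReal) ∈ subG H q p}, p < q →
      F0 q = sSup (H '' Icc p q) := by
    intro q hq hpq
    simp only [mem_setOf_eq, subG] at hq
    rw [if_neg (not_lt.mpr hpq.le), if_neg (ne_of_gt hpq)] at hq
    rw [mem_singleton_iff, EReal.coe_eq_coe_iff] at hq
    rw [hq, godunov, if_pos hpq.le]
  have hsub_p : p ∈ {q : ℝ | (F0 q : EReal) ∈ subG H q p} → F0 p ≤ H p := by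
    intro hq
    simp only [mem_setOf_eq, subG, lt_irrefl, if_false, if_pos rfl, if_neg (lt_irrefl p)] at hq
    exact EReal.coe_le_coe_iff.mp hq
  -- characterization for supG membership
  have hsup_sub : {q : ℝ | (F0 q : EReal) ∈ supG H q p} ⊆ Iic p := by
    intro q hq
    simp only [mem_setOf_eq, supG] at hq
    by_contra hlt
    rw [mem_Iic, not_le] at hlt
    rw [if_neg (not_lt.mpr hlt.le), if_neg (ne_of_gt hlt)] at hq
    exact EReal.coe_ne_top (F0 q) hq
  have hsup_eq : ∀ q ∈ {q : ℝ | (F0 q : EReal) ∈ supG H q p}, q < p →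
      F0 q = sInf (H '' Icc q p) := by
    intro q hq hpq
    simp only [mem_setOf_eq, supG] at hq
    rw [if_pos hpq] at hq
    rw [mem_singleton_iff, EReal.coe_eq_coe_iff] at hq
    rw [hq, godunov, if_neg (not_le.mpr hpq)]
  have hsup_p : p ∈ {q : ℝ | (F0 q : EReal) ∈ supG H q p} → H p ≤ F0 p := by
    intro hq
    simp only [mem_setOf_eq, supG, lt_irrefl, if_false, if_pos rfl, if_neg (lt_irrefl p)] at hq
    exact EReal.coe_le_coe_iff.mp hq
  constructor
  · -- lower semi-flux
    refine ⟨?_, hsub_sub, ?_⟩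
    · rcases le_or_gt (F0 p) (H p) with h | h
      · exact ⟨p, by
          simp only [mem_setOf_eq, subG, if_neg (lt_irrefl p), if_pos rfl]
          exact EReal.coe_le_coe_iff.mpr h⟩
      · obtain ⟨q, hpq, hq⟩ := my_sub_exists H F0 hH hHc hF hFa p h
        refine ⟨q, ?_⟩
        simp only [mem_setOf_eq, subG, if_neg (not_lt.mpr hpq.le), if_neg (ne_of_gt hpq)]
        rw [mem_singleton_iff, EReal.coe_eq_coe_iff, godunov, if_pos hpq.le]
        exact hq
    · have key : ∀ q₁ ∈ {q : ℝ | (F0 q : EReal) ∈ subG H q p},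
          ∀ q₂ ∈ {q : ℝ | (F0 q : EReal) ∈ subG H q p}, q₁ ≤ q₂ → F0 q₁ = F0 q₂ := by
        intro q₁ hq₁ q₂ hq₂ hle
        have hp1 : p ≤ q₁ := hsub_sub hq₁
        have hp2 : p ≤ q₂ := hsub_sub hq₂
        rcases eq_or_lt_of_le hp1 with he1 | hl1
        · rcases eq_or_lt_of_le hp2 with he2 | hl2
          · rw [← he1, ← he2]
          · have h1 : F0 p ≤ H p := hsub_p (he1 ▸ hq₁)
            have h2 : F0 q₂ = sSup (H '' Icc p q₂) := hsub_eq q₂ hq₂ hl2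
            have h3 : H p ≤ sSup (H '' Icc p q₂) :=
              le_csSup (hbddA p q₂) (mem_image_of_mem H ⟨le_refl p, hp2⟩)
            have h4 : F0 q₂ ≤ F0 p := hFa hp2
            rw [← he1]
            linarith
        · have hl2 : p < q₂ := lt_of_lt_of_le hl1 hle
          have h1 : F0 q₁ = sSup (H '' Icc p q₁) := hsub_eq q₁ hq₁ hl1
          have h2 : F0 q₂ = sSup (H '' Icc p q₂) := hsub_eq q₂ hq₂ hl2
          have h3 : sSup (H '' Icc p q₁) ≤ sSup (H '' Icc p q₂) :=
            csSup_le_csSup (hbddA p q₂) ⟨H p, mem_image_of_mem H ⟨le_refl p, hp1⟩⟩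
              (image_mono (Icc_subset_Icc_right hle))
          have h4 : F0 q₂ ≤ F0 q₁ := hFa hle
          linarith
      intro q₁ hq₁ q₂ hq₂
      rcases le_total q₁ q₂ with h | h
      · exact key q₁ hq₁ q₂ hq₂ h
      · exact (key q₂ hq₂ q₁ hq₁ h).symm
  · -- upper semi-flux
    refine ⟨?_, hsup_sub, ?_⟩
    · rcases le_or_gt (H p) (F0 p) with h | h
      · exact ⟨p, by
          simp only [mem_setOf_eq, supG, if_neg (lt_irrefl p), if_pos rfl]
          exact EReal.coe_le_coe_iff.mpr h⟩
      · obtain ⟨q, hpq, hq⟩ := my_sup_exists H F0 hH hF hFa hFs p h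
        refine ⟨q, ?_⟩
        simp only [mem_setOf_eq, supG, if_pos hpq]
        rw [mem_singleton_iff, EReal.coe_eq_coe_iff, godunov, if_neg (not_le.mpr hpq)]
        exact hq
    · have key : ∀ q₁ ∈ {q : ℝ | (F0 q : EReal) ∈ supG H q p},
          ∀ q₂ ∈ {q : ℝ | (F0 q : EReal) ∈ supG H q p}, q₁ ≤ q₂ → F0 q₁ = F0 q₂ := by
        intro q₁ hq₁ q₂ hq₂ hle
        have hp1 : q₁ ≤ p := hsup_sub hq₁
        have hp2 : q₂ ≤ p := hsup_sub hq₂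
        rcases eq_or_lt_of_le hp2 with he2 | hl2
        · rcases eq_or_lt_of_le hp1 with he1 | hl1
          · rw [he1, he2]
          · have h1 : H p ≤ F0 p := hsup_p (he2 ▸ hq₂)
            have h2 : F0 q₁ = sInf (H '' Icc q₁ p) := hsup_eq q₁ hq₁ hl1
            have h3 : sInf (H '' Icc q₁ p) ≤ H p :=
              csInf_le (hbddB q₁ p) (mem_image_of_mem H ⟨hp1, le_refl p⟩)
            have h4 : F0 p ≤ F0 q₁ := hFa hp1
            rw [he2]
            linarith
        · have hl1 : q₁ < p := lt_of_le_of_lt hle hl2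
          have h1 : F0 q₁ = sInf (H '' Icc q₁ p) := hsup_eq q₁ hq₁ hl1
          have h2 : F0 q₂ = sInf (H '' Icc q₂ p) := hsup_eq q₂ hq₂ hl2
          have h3 : sInf (H '' Icc q₁ p) ≤ sInf (H '' Icc q₂ p) :=
            csInf_le_csInf (hbddB q₁ p) ⟨H p, mem_image_of_mem H ⟨hp2, le_refl p⟩⟩
              (image_mono (Icc_subset_Icc_left hle))
          have h4 : F0 q₂ ≤ F0 q₁ := hFa hle
          linarith
      intro q₁ hq₁ q₂ hq₂
      rcases le_total q₁ q₂ with h | h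
      · exact key q₁ hq₁ q₂ hq₂ h
      · exact (key q₂ hq₂ q₁ hq₁ h).symm
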